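/- For positive semidefinite matrices M and N of the same finite size, the trace norm of M − N is at most ‖√M − √N‖₂ · ‖√M + √N‖₂. -/

import Mathlib

open Matrix
open ComplexOrder
open scoped Classical

/-- positive semidefinite square root (junk value `0` off the PSD matrices) -/
noncomputable def msqrt {n : Type*} [Fintype n] [DecidableEq n] (A : Matrix n n ℂ) :
    Matrix n n ℂ :=
  if h : A.PosSemidef then (h.1.eigenvectorUnitary : Matrix n n ℂ) *
    diagonal ((↑) ∘ (√·) ∘ h.1.eigenvalues) * (star h.1.eigenvectorUnitary : Matrix n n ℂ) else 0

/-- matrix logarithm via the Hermitian functional calculus (junk value `0` otherwise) -/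
noncomputable def mlog {n : Type*} [Fintype n] [DecidableEq n] (A : Matrix n n ℂ) :
    Matrix n n ℂ :=
  if h : A.IsHermitian then h.cfc Real.log else 0

/-- matrix logarithm taken on the support (eigenvalue `0` is sent to `0`) -/
noncomputable def mlog0 {n : Type*} [Fintype n] [DecidableEq n] (A : Matrix n n ℂ) :
    Matrix n n ℂ :=
  if h : A.IsHermitian then h.cfc (fun x => if x = 0 then 0 else Real.log x) else 0

/-- matrix exponential -/
noncomputable def mexp {n : Type*} [Fintype n] [DecidableEq n] (A : Matrix n n ℂ) :
    Matrix n n ℂ :=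
  NormedSpace.exp A

/-- Frobenius (Hilbert–Schmidt) norm `‖X‖₂ = (Tr (Xᴴ X))^(1/2)` -/
noncomputable def frob {n : Type*} [Fintype n] [DecidableEq n] (X : Matrix n n ℂ) : ℝ :=
  Real.sqrt (Matrix.trace (Xᴴ * X)).re

/-- trace norm `‖X‖₁ = Tr √(Xᴴ X)` -/
noncomputable def trNorm {n : Type*} [Fintype n] [DecidableEq n] (X : Matrix n n ℂ) : ℝ :=
  (Matrix.trace (msqrt (Xᴴ * X))).re

/-- relative entropy `S(ρ‖σ) = Tr (ρ (log ρ − log σ))` -/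
noncomputable def relEnt {n : Type*} [Fintype n] [DecidableEq n]
    (rho sigma : Matrix n n ℂ) : ℝ :=
  (Matrix.trace (rho * (mlog rho - mlog sigma))).re

/-- relative entropy with logarithms taken on the support -/
noncomputable def relEnt0 {n : Type*} [Fintype n] [DecidableEq n]
    (rho sigma : Matrix n n ℂ) : ℝ :=
  (Matrix.trace (rho * (mlog0 rho - mlog0 sigma))).re

/-- von Neumann entropy `S(τ) = −Tr (τ log τ)` -/
noncomputable def vN {n : Type*} [Fintype n] [DecidableEq n] (rho : Matrix n n ℂ) : ℝ :=
  -(Matrix.trace (rho * mlog rho)).re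

section Tripartite

variable {α β γ : Type*} [Fintype α] [DecidableEq α] [Fintype β] [DecidableEq β]
  [Fintype γ] [DecidableEq γ]

/-- partial trace over the `B` system: `ρ_AC` -/
noncomputable def ptrB (M : Matrix (α × β × γ) (α × β × γ) ℂ) : Matrix (α × γ) (α × γ) ℂ :=
  fun p q => ∑ b : β, M (p.1, b, p.2) (q.1, b, q.2)

/-- partial trace over the `A` system: `ρ_BC` -/
noncomputable def ptrA (M : Matrix (α × β × γ) (α × β × γ) ℂ) : Matrix (β × γ) (β × γ) ℂ :=
  fun p q => ∑ a : α, M (a, p.1, p.2) (a, q.1, q.2)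

/-- partial trace over the `A` and `B` systems: `ρ_C` -/
noncomputable def ptrAB (M : Matrix (α × β × γ) (α × β × γ) ℂ) : Matrix γ γ ℂ :=
  fun c c' => ∑ a : α, ∑ b : β, M (a, b, c) (a, b, c')

/-- embedding `X_AC ↦ X_AC ⊗ I_B` -/
def embAC (X : Matrix (α × γ) (α × γ) ℂ) : Matrix (α × β × γ) (α × β × γ) ℂ :=
  fun p q => if p.2.1 = q.2.1 then X (p.1, p.2.2) (q.1, q.2.2) else 0

/-- embedding `X_BC ↦ I_A ⊗ X_BC` -/
def embBC (X : Matrix (β × γ) (β × γ) ℂ) : Matrix (α × β × γ) (α × β × γ) ℂ :=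
  fun p q => if p.1 = q.1 then X p.2 q.2 else 0

/-- embedding `X_C ↦ I_A ⊗ I_B ⊗ X_C` -/
def embC (X : Matrix γ γ ℂ) : Matrix (α × β × γ) (α × β × γ) ℂ :=
  fun p q => if p.1 = q.1 ∧ p.2.1 = q.2.1 then X p.2.2 q.2.2 else 0

/-- conditional mutual information `I(A:B|C)_ρ = S(ρ_AC)+S(ρ_BC)−S(ρ_ABC)−S(ρ_C)` -/
noncomputable def cmi (rho : Matrix (α × β × γ) (α × β × γ) ℂ) : ℝ :=
  vN (ptrB rho) + vN (ptrA rho) - vN rho - vN (ptrAB rho)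

/-- the operator `exp(log σ_AC + log σ_BC − log σ_C)` -/
noncomputable def sigOp (sigma : Matrix (α × β × γ) (α × β × γ) ℂ) :
    Matrix (α × β × γ) (α × β × γ) ℂ :=
  mexp (embAC (mlog (ptrB sigma)) + embBC (mlog (ptrA sigma)) - embC (mlog (ptrAB sigma)))

/-- the operator `exp(log ρ_AC + log ρ_BC)` -/
noncomputable def sigOp2 (sigma : Matrix (α × β × γ) (α × β × γ) ℂ) :
    Matrix (α × β × γ) (α × β × γ) ℂ :=
  mexp (embAC (mlog (ptrB sigma)) + embBC (mlog (ptrA sigma)))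

end Tripartite

section Aux
variable {n : Type*} [Fintype n] [DecidableEq n]

private lemma trace_conjT_mul (X Y : Matrix n n ℂ) :
    Matrix.trace (Xᴴ * Y) = ∑ p : n × n, (starRingEnd ℂ) (X p.1 p.2) * Y p.1 p.2 := by
  rw [Fintype.sum_prod_type]
  simp only [Matrix.trace, Matrix.diag, Matrix.mul_apply, Matrix.conjTranspose_apply]
  exact Finset.sum_comm

private lemma frob_eq_norm (X : Matrix n n ℂ) :
    frob X = ‖(WithLp.equiv 2 ((n × n) → ℂ)).symm (fun p => X p.1 p.2)‖ := by
  rw [frob, EuclideanSpace.norm_eq]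
  congr 1
  rw [trace_conjT_mul, Complex.re_sum]
  refine Finset.sum_congr rfl fun p _ => ?_
  rw [mul_comm, Complex.mul_conj]
  simp [Complex.normSq_eq_norm_sq, ← Complex.ofReal_pow]

private lemma norm_trace_le (X Y : Matrix n n ℂ) :
    ‖Matrix.trace (Xᴴ * Y)‖ ≤ frob X * frob Y := by
  have h := norm_inner_le_norm (𝕜 := ℂ)
    ((WithLp.equiv 2 ((n × n) → ℂ)).symm (fun p => X p.1 p.2))
    ((WithLp.equiv 2 ((n × n) → ℂ)).symm (fun p => Y p.1 p.2))
  rw [← frob_eq_norm, ← frob_eq_norm] at h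
  refine le_trans (le_of_eq ?_) h
  congr 1
  rw [trace_conjT_mul]
  simp [PiLp.inner_apply, RCLike.inner_apply]
  exact Finset.sum_congr rfl fun _ _ => mul_comm _ _

private lemma msqrt_eq_cfc {M : Matrix n n ℂ} (hM : M.PosSemidef) : msqrt M = cfc Real.sqrt M := by
  rw [msqrt, dif_pos hM, hM.1.cfc_eq, Matrix.IsHermitian.cfc, Unitary.conjStarAlgAut_apply]
  rfl

private lemma msqrt_psd {M : Matrix n n ℂ} (hM : M.PosSemidef) : (msqrt M).PosSemidef := by
  rw [msqrt, dif_pos hM, Matrix.star_eq_conjTranspose]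
  apply Matrix.PosSemidef.mul_mul_conjTranspose_same
  refine Matrix.posSemidef_diagonal_iff.mpr fun i => ?_
  simp only [Function.comp_apply]
  exact Complex.zero_le_real.mpr (Real.sqrt_nonneg _)

private lemma msqrt_mul_self {M : Matrix n n ℂ} (hM : M.PosSemidef) : msqrt M * msqrt M = M := by
  have hcont : ContinuousOn Real.sqrt (spectrum ℝ M) :=
    Set.Finite.continuousOn (Matrix.finite_real_spectrum (A := M)) _
  rw [msqrt_eq_cfc hM, ← cfc_mul _ _ M hcont hcont]
  calc cfc (fun x => √x * √x) M = cfc (fun x : ℝ => x) M := by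
        apply cfc_congr; intro x hx
        obtain ⟨i, rfl⟩ := hM.1.spectrum_real_eq_range_eigenvalues ▸ hx
        exact Real.mul_self_sqrt (hM.eigenvalues_nonneg i)
    _ = M := cfc_id' ℝ M hM.1

end Aux

set_option maxHeartbeats 1000000
theorem trace_norm_le_frob_mul_frob {n : Type*} [Fintype n] [DecidableEq n]
    (M N : Matrix n n ℂ) (hM : M.PosSemidef) (hN : N.PosSemidef) :
    trNorm (M - N) ≤ frob (msqrt M - msqrt N) * frob (msqrt M + msqrt N) := by
  classical
  set A := msqrt M with hAs
  set B := msqrt N with hBs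
  have hApsd : A.PosSemidef := msqrt_psd hM
  have hBpsd : B.PosSemidef := msqrt_psd hN
  have hAH : A.IsHermitian := hApsd.1
  have hBH : B.IsHermitian := hBpsd.1
  have hA2 : A * A = M := msqrt_mul_self hM
  have hB2 : B * B = N := msqrt_mul_self hN
  set D := M - N with hDs
  have hD : D.IsHermitian := hM.1.sub hN.1
  have hcont : ∀ f : ℝ → ℝ, ContinuousOn f (spectrum ℝ D) :=
    fun f => Set.Finite.continuousOn (Matrix.finite_real_spectrum (A := D)) f
  set sgn : ℝ → ℝ := fun x => if x < 0 then -1 else 1 with hsgn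
  set U := cfc sgn D with hU
  have hUH : U.IsHermitian := cfc_predicate sgn D
  have hUU : U * U = 1 := by
    rw [hU, ← cfc_mul sgn sgn D (hcont _) (hcont _)]
    calc cfc (fun x => sgn x * sgn x) D = cfc (fun _ : ℝ => (1:ℝ)) D := by
          apply cfc_congr; intro x _
          by_cases h : x < 0 <;> simp [hsgn, h]
      _ = 1 := cfc_const_one ℝ D
  have hUD : U * D = cfc (fun x : ℝ => |x|) D := by
    rw [hU]
    nth_rewrite 2 [← cfc_id' ℝ D]
    rw [← cfc_mul sgn _ D (hcont _) (hcont _)]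
    apply cfc_congr; intro x _
    by_cases h : x < 0
    · simp [hsgn, h, abs_of_neg h]
    · simp [hsgn, h, abs_of_nonneg (not_lt.mp h)]
  have habs_psd : (cfc (fun x : ℝ => |x|) D).PosSemidef := by
    rw [hD.cfc_eq, Matrix.IsHermitian.cfc, Unitary.conjStarAlgAut_apply, Matrix.star_eq_conjTranspose]
    apply Matrix.PosSemidef.mul_mul_conjTranspose_same
    refine Matrix.posSemidef_diagonal_iff.mpr fun i => ?_
    simp only [Function.comp_apply, RCLike.ofReal_alg]
    rw [show ((|hD.eigenvalues i| : ℝ) • (1:ℂ)) = ((|hD.eigenvalues i| : ℝ) : ℂ) by simp]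
    exact_mod_cast Complex.zero_le_real.mpr (abs_nonneg _)
  have hsq : (cfc (fun x : ℝ => |x|) D) ^ 2 = Dᴴ * D := by
    rw [sq, ← cfc_mul _ _ D (hcont _) (hcont _)]
    have : cfc (fun x : ℝ => |x| * |x|) D = cfc (fun x : ℝ => x * x) D :=
      cfc_congr fun x _ => abs_mul_abs_self x
    rw [this, cfc_mul _ _ D (hcont _) (hcont _), cfc_id' ℝ D, hD.eq]
  have hmsqrt : msqrt (Dᴴ * D) = cfc (fun x : ℝ => |x|) D := by
    have hpsd : (Dᴴ * D).PosSemidef := Matrix.posSemidef_conjTranspose_mul_self D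
    have hDD : Dᴴ * D = cfc (fun x : ℝ => x * x) D := by
      rw [cfc_mul _ _ D (hcont _) (hcont _), cfc_id' ℝ D, hD.eq]
    rw [msqrt_eq_cfc hpsd, hDD, ← cfc_comp Real.sqrt (fun x : ℝ => x * x) D]
    exact cfc_congr fun x _ => Real.sqrt_mul_self_eq_abs x
  have htr : trNorm D = (Matrix.trace (U * D)).re := by
    rw [trNorm, hmsqrt, hUD]
  set C := A - B with hCs
  set S := A + B with hSs
  have hCH : C.IsHermitian := hAH.sub hBH
  have hSH : S.IsHermitian := hAH.add hBH
  have halg : C * S + S * C = D + D := by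
    have : C * S + S * C = A * A + A * A - (B * B + B * B) := by
      rw [hCs, hSs]; noncomm_ring
    rw [this, hA2, hB2, hDs]; abel
  -- frobenius norm invariances
  have hfrobUS : frob (U * S) = frob S := by
    rw [frob, frob]
    congr 2
    rw [Matrix.conjTranspose_mul, hUH.eq, hSH.eq, mul_assoc, ← mul_assoc U U S,
      hUU, one_mul]
  have hfrobUC : frob (U * C) = frob C := by
    rw [frob, frob]
    congr 2
    rw [Matrix.conjTranspose_mul, hUH.eq, hCH.eq, mul_assoc, ← mul_assoc U U C,
      hUU, one_mul]
  -- the two Cauchy–Schwarz bounds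
  have h1 : (Matrix.trace (U * (C * S))).re ≤ frob S * frob C := by
    have he : Matrix.trace (U * (C * S)) = Matrix.trace ((U * S)ᴴ * C) := by
      rw [Matrix.conjTranspose_mul, hUH.eq, hSH.eq, Matrix.trace_mul_comm U (C * S),
        mul_assoc, Matrix.trace_mul_comm C (S * U)]
    calc (Matrix.trace (U * (C * S))).re ≤ ‖Matrix.trace ((U * S)ᴴ * C)‖ := by
          rw [← he]; exact Complex.re_le_norm _
      _ ≤ frob (U * S) * frob C := norm_trace_le _ _
      _ = frob S * frob C := by rw [hfrobUS]
  have h2 : (Matrix.trace (U * (S * C))).re ≤ frob C * frob S := by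
    have he : Matrix.trace (U * (S * C)) = Matrix.trace ((U * C)ᴴ * S) := by
      rw [Matrix.conjTranspose_mul, hUH.eq, hCH.eq, Matrix.trace_mul_comm U (S * C),
        mul_assoc, Matrix.trace_mul_comm S (C * U)]
    calc (Matrix.trace (U * (S * C))).re ≤ ‖Matrix.trace ((U * C)ᴴ * S)‖ := by
          rw [← he]; exact Complex.re_le_norm _
      _ ≤ frob (U * C) * frob S := norm_trace_le _ _
      _ = frob C * frob S := by rw [hfrobUC]
  have hsum : Matrix.trace (U * D) + Matrix.trace (U * D)
      = Matrix.trace (U * (C * S)) + Matrix.trace (U * (S * C)) := by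
    rw [← Matrix.trace_add, ← Matrix.trace_add, ← mul_add, ← mul_add, halg]
  have hre := congrArg Complex.re hsum
  simp only [Complex.add_re] at hre
  show trNorm D ≤ frob C * frob S
  rw [htr]
  linarith [h1, h2, hre]
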